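/- Let P be a finite partially ordered set and let x, y ∈ P. Then M_x ⊆ M_y (every maximal chain of P containing x also contains y) if and only if y dominates x (every element of P comparable with x is comparable with y). -/
import Mathlib


/-- In a finite poset, every maximal chain containing `x` also contains `y`
(`M_x ⊆ M_y`) if and only if `y` dominates `x`, i.e. every element comparable
with `x` is comparable with `y`. -/
theorem stmt_15 {P : Type} [Fintype P] [PartialOrder P] (x y : P) :
    (∀ C : Set P, IsMaxChain (· ≤ ·) C → x ∈ C → y ∈ C) ↔
    (∀ z : P, (z ≤ x ∨ x ≤ z) → (z ≤ y ∨ y ≤ z)) := by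
  constructor
  · intro h z hz
    have hchain : IsChain (· ≤ ·) ({x, z} : Set P) := by
      intro a ha b hb hab
      rcases ha with rfl | ha <;> rcases hb with rfl | hb <;>
        first
        | exact absurd rfl hab
        | (subst hb; tauto)
        | (subst ha; tauto)
    obtain ⟨C, hC, hsub⟩ := hchain.exists_maxChain
    have hx : x ∈ C := hsub (by simp)
    have hzC : z ∈ C := hsub (by simp)
    have hy : y ∈ C := h C hC hx
    rcases eq_or_ne z y with rfl | hne
    · exact Or.inl le_rfl
    · exact hC.1 hzC hy hne
  · intro h C hC hx
    have hchain : IsChain (· ≤ ·) (insert y C) := by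
      intro a ha b hb hab
      rcases ha with rfl | ha <;> rcases hb with rfl | hb
      · exact absurd rfl hab
      · have hbx : b ≤ x ∨ x ≤ b := by
          rcases eq_or_ne b x with rfl | hne
          · exact Or.inl le_rfl
          · exact hC.1 hb hx hne
        exact (h b hbx).symm
      · have hax : a ≤ x ∨ x ≤ a := by
          rcases eq_or_ne a x with rfl | hne
          · exact Or.inl le_rfl
          · exact hC.1 ha hx hne
        exact h a hax
      · exact hC.1 ha hb hab
    have := hC.2 hchain (Set.subset_insert _ _)
    rw [this]
    exact Set.mem_insert _ _
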